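/- Let π and π̃ be probability measures on a measurable space Ω, let F : Ω → ℝ be measurable with ‖F‖_∞ ≤ C_ab, and let δ ∈ [0, 1]. Let P be the Gibbs tilt of π by δF and P̃ the Gibbs tilt of π̃ by δF. Then ‖P − P̃‖_TV ≤ (2 e^{2δ C_ab} − e^{δ C_ab}) ‖π − π̃‖_TV ≤ (1 + C₂ δ) ‖π − π̃‖_TV, where C₂ := 4 C_ab e^{2 C_ab}. -/

import Mathlib

open MeasureTheory

/-- Total variation distance `(1/2) ∫ |dP/dλ − dQ/dλ| dλ` with the common
dominating measure `λ = P + Q`. -/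
noncomputable def tvDist {Ω : Type*} [MeasurableSpace Ω]
    (P Q : Measure Ω) : ℝ :=
  (1 / 2) * ∫ ω, |(P.rnDeriv (P + Q) ω).toReal
    - (Q.rnDeriv (P + Q) ω).toReal| ∂(P + Q)

/-- The Gibbs tilt of `π` by `G`: the probability measure with density
`e^G / ∫ e^G dπ` with respect to `π`. -/
noncomputable def gibbsTilt {Ω : Type*} [MeasurableSpace Ω]
    (π : Measure Ω) (G : Ω → ℝ) : Measure Ω :=
  π.withDensity fun ω =>
    ENNReal.ofReal (Real.exp (G ω) / ∫ ω', Real.exp (G ω') ∂π)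

/-- Propagation of sampling error through a frozen tilting step: tilting two
probability measures by the same bounded weight `δF`, `‖F‖_∞ ≤ C_ab`,
`δ ∈ [0,1]`, amplifies their total variation distance by at most
`2e^{2δC_ab} − e^{δC_ab} ≤ 1 + C₂ δ`, `C₂ = 4 C_ab e^{2C_ab}`. -/
lemma tvDist_eq_of_ac {Ω : Type*} [MeasurableSpace Ω] {P Q μ : Measure Ω}
    [IsFiniteMeasure P] [IsFiniteMeasure Q] [SigmaFinite μ]
    (hP : P ≪ μ) (hQ : Q ≪ μ) :
    tvDist P Q = (1 / 2) * ∫ x, |(P.rnDeriv μ x).toReal - (Q.rnDeriv μ x).toReal| ∂μ := by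
  have hPν : P ≪ P + Q := Measure.absolutelyContinuous_of_le (Measure.le_add_right le_rfl)
  have hQν : Q ≪ P + Q := Measure.absolutelyContinuous_of_le (Measure.le_add_left le_rfl)
  have hνμ : P + Q ≪ μ := hP.add_left hQ
  rw [tvDist]
  congr 1
  have h := MeasureTheory.integral_rnDeriv_smul (μ := P + Q) (ν := μ)
    (f := fun x => |(P.rnDeriv (P + Q) x).toReal - (Q.rnDeriv (P + Q) x).toReal|) hνμ
  rw [← h]
  refine integral_congr_ae ?_
  filter_upwards [Measure.rnDeriv_mul_rnDeriv (κ := μ) hPν,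
    Measure.rnDeriv_mul_rnDeriv (κ := μ) hQν] with x h1 h2
  rw [smul_eq_mul, ← h1, ← h2, Pi.mul_apply, Pi.mul_apply, ENNReal.toReal_mul,
    ENNReal.toReal_mul, ← sub_mul, abs_mul, abs_of_nonneg ENNReal.toReal_nonneg, mul_comm]

lemma exp_sub_one_le_mul (x : ℝ) : Real.exp x - 1 ≤ x * Real.exp x := by
  have h1 : Real.exp x * Real.exp (-x) = 1 := by rw [← Real.exp_add]; simp
  nlinarith [Real.add_one_le_exp (-x), Real.exp_pos x]

set_option maxHeartbeats 1000000 in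
theorem tilting_error_propagation
    {Ω : Type*} [MeasurableSpace Ω]
    (π π' : Measure Ω) [IsProbabilityMeasure π] [IsProbabilityMeasure π']
    (F : Ω → ℝ) (hFm : Measurable F)
    (Cab : ℝ) (hFb : ∀ ω, |F ω| ≤ Cab)
    (δ : ℝ) (hδ0 : 0 ≤ δ) (hδ1 : δ ≤ 1) :
    tvDist (gibbsTilt π fun ω => δ * F ω) (gibbsTilt π' fun ω => δ * F ω)
      ≤ (2 * Real.exp (2 * δ * Cab) - Real.exp (δ * Cab)) * tvDist π π'
    ∧ (2 * Real.exp (2 * δ * Cab) - Real.exp (δ * Cab)) * tvDist π π'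
      ≤ (1 + (4 * Cab * Real.exp (2 * Cab)) * δ) * tvDist π π' := by
  classical
  -- basic positivity facts
  have hne : Nonempty Ω := by
    by_contra h
    rw [not_nonempty_iff] at h
    have h1 : π Set.univ = 1 := measure_univ
    rw [Set.univ_eq_empty_iff.mpr h] at h1
    simp at h1
  have hC0 : 0 ≤ Cab := le_trans (abs_nonneg _) (hFb (Classical.arbitrary Ω))
  set a : ℝ := δ * Cab with ha_def
  have ha0 : 0 ≤ a := mul_nonneg hδ0 hC0
  set g : Ω → ℝ := fun ω => Real.exp (δ * F ω) with hg_def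
  have hgm : Measurable g := (hFm.const_mul δ).exp
  have hg_pos : ∀ ω, 0 < g ω := fun ω => Real.exp_pos _
  have hg_le : ∀ ω, g ω ≤ Real.exp a := fun ω => Real.exp_le_exp.2
    (mul_le_mul_of_nonneg_left (abs_le.1 (hFb ω)).2 hδ0)
  have hg_ge : ∀ ω, Real.exp (-a) ≤ g ω := by
    intro ω
    refine Real.exp_le_exp.2 ?_
    have := mul_le_mul_of_nonneg_left (abs_le.1 (hFb ω)).1 hδ0
    nlinarith
  -- the common dominating measure
  set μ : Measure Ω := π + π' with hμ_def
  have hπμ : π ≪ μ := Measure.absolutelyContinuous_of_le (Measure.le_add_right le_rfl)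
  have hπ'μ : π' ≪ μ := Measure.absolutelyContinuous_of_le (Measure.le_add_left le_rfl)
  set p : Ω → ℝ := fun x => (π.rnDeriv μ x).toReal with hp_def
  set p' : Ω → ℝ := fun x => (π'.rnDeriv μ x).toReal with hp'_def
  have hp_int : Integrable p μ := Measure.integrable_toReal_rnDeriv
  have hp'_int : Integrable p' μ := Measure.integrable_toReal_rnDeriv
  have hp_nonneg : ∀ x, 0 ≤ p x := fun _ => ENNReal.toReal_nonneg
  have hp'_nonneg : ∀ x, 0 ≤ p' x := fun _ => ENNReal.toReal_nonneg
  have hp_one : ∫ x, p x ∂μ = 1 := by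
    rw [hp_def, Measure.integral_toReal_rnDeriv hπμ]; simp
  have hp'_one : ∫ x, p' x ∂μ = 1 := by
    rw [hp'_def, Measure.integral_toReal_rnDeriv hπ'μ]; simp
  set E : ℝ := ∫ x, |p x - p' x| ∂μ with hE_def
  have hE_int : Integrable (fun x => |p x - p' x|) μ := (hp_int.sub hp'_int).abs
  have hE0 : 0 ≤ E := integral_nonneg fun x => abs_nonneg _
  have hTV : tvDist π π' = (1 / 2) * E := by
    rw [tvDist, hE_def]
  -- normalizing constants
  set Z : ℝ := ∫ ω', Real.exp (δ * F ω') ∂π with hZ_def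
  set Z' : ℝ := ∫ ω', Real.exp (δ * F ω') ∂π' with hZ'_def
  have hg_int : ∀ (ν : Measure Ω), IsProbabilityMeasure ν → Integrable g ν := by
    intro ν hν
    refine Integrable.mono' (integrable_const (Real.exp a)) hgm.aestronglyMeasurable ?_
    exact ae_of_all _ fun ω => by
      rw [Real.norm_eq_abs, abs_of_pos (hg_pos ω)]; exact hg_le ω
  have hZ_lb : Real.exp (-a) ≤ Z := by
    have := integral_mono (integrable_const (Real.exp (-a))) (hg_int π inferInstance)
      (fun ω => hg_ge ω)
    simpa using this
  have hZ_ub : Z ≤ Real.exp a := by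
    have := integral_mono (hg_int π inferInstance) (integrable_const (Real.exp a))
      (fun ω => hg_le ω)
    simpa using this
  have hZ'_lb : Real.exp (-a) ≤ Z' := by
    have := integral_mono (integrable_const (Real.exp (-a))) (hg_int π' inferInstance)
      (fun ω => hg_ge ω)
    simpa using this
  have hZ'_ub : Z' ≤ Real.exp a := by
    have := integral_mono (hg_int π' inferInstance) (integrable_const (Real.exp a))
      (fun ω => hg_le ω)
    simpa using this
  have hZ_pos : 0 < Z := lt_of_lt_of_le (Real.exp_pos _) hZ_lb
  have hZ'_pos : 0 < Z' := lt_of_lt_of_le (Real.exp_pos _) hZ'_lb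
  have hZinv : Z⁻¹ ≤ Real.exp a := by
    have h := inv_anti₀ (Real.exp_pos (-a)) hZ_lb
    rwa [Real.exp_neg, inv_inv] at h
  -- the tilted measures
  have hgibbs : gibbsTilt π (fun ω => δ * F ω)
      = π.withDensity (fun ω => ENNReal.ofReal (g ω / Z)) := by
    rw [gibbsTilt]
  have hgibbs' : gibbsTilt π' (fun ω => δ * F ω)
      = π'.withDensity (fun ω => ENNReal.ofReal (g ω / Z')) := by
    rw [gibbsTilt]
  have hfin : ∀ (ν : Measure Ω) (c : ℝ), IsProbabilityMeasure ν → 0 < c →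
      IsFiniteMeasure (ν.withDensity (fun ω => ENNReal.ofReal (g ω / c))) := by
    intro ν c hν hc
    constructor
    rw [withDensity_apply _ MeasurableSet.univ, setLIntegral_univ]
    calc ∫⁻ ω, ENNReal.ofReal (g ω / c) ∂ν
        ≤ ∫⁻ _, ENNReal.ofReal (Real.exp a / c) ∂ν := by
          refine lintegral_mono fun ω => ENNReal.ofReal_le_ofReal ?_
          exact div_le_div_of_nonneg_right (hg_le ω) hc.le
      _ < ⊤ := by rw [lintegral_const]; simp [measure_univ]
  haveI hPfin : IsFiniteMeasure (gibbsTilt π (fun ω => δ * F ω)) := by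
    rw [hgibbs]; exact hfin π Z inferInstance hZ_pos
  haveI hP'fin : IsFiniteMeasure (gibbsTilt π' (fun ω => δ * F ω)) := by
    rw [hgibbs']; exact hfin π' Z' inferInstance hZ'_pos
  have hPμ : gibbsTilt π (fun ω => δ * F ω) ≪ μ := by
    rw [hgibbs]; exact (withDensity_absolutelyContinuous _ _).trans hπμ
  have hP'μ : gibbsTilt π' (fun ω => δ * F ω) ≪ μ := by
    rw [hgibbs']; exact (withDensity_absolutelyContinuous _ _).trans hπ'μ
  -- densities of the tilted measures w.r.t. μ
  have hd : (gibbsTilt π (fun ω => δ * F ω)).rnDeriv μ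
      =ᵐ[μ] fun x => ENNReal.ofReal (g x / Z) * π.rnDeriv μ x := by
    rw [hgibbs]
    exact Measure.rnDeriv_withDensity_left
      ((hgm.div_const Z).ennreal_ofReal).aemeasurable
      (ae_of_all _ fun x => ENNReal.ofReal_ne_top)
  have hd' : (gibbsTilt π' (fun ω => δ * F ω)).rnDeriv μ
      =ᵐ[μ] fun x => ENNReal.ofReal (g x / Z') * π'.rnDeriv μ x := by
    rw [hgibbs']
    exact Measure.rnDeriv_withDensity_left
      ((hgm.div_const Z').ennreal_ofReal).aemeasurable
      (ae_of_all _ fun x => ENNReal.ofReal_ne_top)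
  set B : ℝ := |Z⁻¹ - Z'⁻¹| with hB_def
  -- pointwise bound
  have hptw : ∀ᵐ x ∂μ, |((gibbsTilt π (fun ω => δ * F ω)).rnDeriv μ x).toReal
      - ((gibbsTilt π' (fun ω => δ * F ω)).rnDeriv μ x).toReal|
      ≤ Real.exp (2 * a) * |p x - p' x| + (g x * p' x) * B := by
    filter_upwards [hd, hd'] with x h1 h2
    rw [h1, h2, ENNReal.toReal_mul, ENNReal.toReal_mul,
      ENNReal.toReal_ofReal (div_nonneg (hg_pos x).le hZ_pos.le),
      ENNReal.toReal_ofReal (div_nonneg (hg_pos x).le hZ'_pos.le)]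
    have split : g x / Z * p x - g x / Z' * p' x
        = (g x / Z) * (p x - p' x) + g x * p' x * (Z⁻¹ - Z'⁻¹) := by
      field_simp
      ring
    rw [split]
    calc |(g x / Z) * (p x - p' x) + g x * p' x * (Z⁻¹ - Z'⁻¹)|
        ≤ |(g x / Z) * (p x - p' x)| + |g x * p' x * (Z⁻¹ - Z'⁻¹)| := abs_add_le _ _
      _ ≤ Real.exp (2 * a) * |p x - p' x| + (g x * p' x) * B := by
          gcongr ?_ + ?_
          · rw [abs_mul, abs_of_nonneg (div_nonneg (hg_pos x).le hZ_pos.le)]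
            refine mul_le_mul_of_nonneg_right ?_ (abs_nonneg _)
            calc g x / Z = g x * Z⁻¹ := div_eq_mul_inv _ _
              _ ≤ Real.exp a * Real.exp a := by
                  refine mul_le_mul (hg_le x) hZinv (inv_nonneg.2 hZ_pos.le)
                    (Real.exp_pos _).le
              _ = Real.exp (2 * a) := by rw [← Real.exp_add]; ring_nf
          · rw [abs_mul, abs_of_nonneg (mul_nonneg (hg_pos x).le (hp'_nonneg x))]
  -- integrabilities
  have hgp'_int : Integrable (fun x => g x * p' x) μ :=
    hp'_int.bdd_mul hgm.aestronglyMeasurable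
      (c := Real.exp a) (ae_of_all _ fun x => by rw [Real.norm_eq_abs, abs_of_pos (hg_pos x)]; exact hg_le x)
  have hgp_int : Integrable (fun x => g x * p x) μ :=
    hp_int.bdd_mul hgm.aestronglyMeasurable
      (c := Real.exp a) (ae_of_all _ fun x => by rw [Real.norm_eq_abs, abs_of_pos (hg_pos x)]; exact hg_le x)
  have hL_int : Integrable (fun x => |((gibbsTilt π (fun ω => δ * F ω)).rnDeriv μ x).toReal
      - ((gibbsTilt π' (fun ω => δ * F ω)).rnDeriv μ x).toReal|) μ :=
    (Measure.integrable_toReal_rnDeriv.sub Measure.integrable_toReal_rnDeriv).abs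
  -- the integral identities for Z, Z'
  have hZ_eq : ∫ x, g x * p x ∂μ = Z := by
    have h := MeasureTheory.integral_rnDeriv_smul (μ := π) (ν := μ) (f := g) hπμ
    rw [hZ_def, ← h]
    refine integral_congr_ae (ae_of_all _ fun x => ?_)
    simp only [smul_eq_mul, hp_def]
    exact mul_comm _ _
  have hZ'_eq : ∫ x, g x * p' x ∂μ = Z' := by
    have h := MeasureTheory.integral_rnDeriv_smul (μ := π') (ν := μ) (f := g) hπ'μ
    rw [hZ'_def, ← h]
    refine integral_congr_ae (ae_of_all _ fun x => ?_)
    simp only [smul_eq_mul, hp'_def]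
    exact mul_comm _ _
  -- main integral bound
  have step1 : ∫ x, |((gibbsTilt π (fun ω => δ * F ω)).rnDeriv μ x).toReal
      - ((gibbsTilt π' (fun ω => δ * F ω)).rnDeriv μ x).toReal| ∂μ
      ≤ Real.exp (2 * a) * E + Z' * B := by
    calc ∫ x, |((gibbsTilt π (fun ω => δ * F ω)).rnDeriv μ x).toReal
        - ((gibbsTilt π' (fun ω => δ * F ω)).rnDeriv μ x).toReal| ∂μ
        ≤ ∫ x, (Real.exp (2 * a) * |p x - p' x| + (g x * p' x) * B) ∂μ :=
          integral_mono_ae hL_int ((hE_int.const_mul _).add (hgp'_int.mul_const B)) hptw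
      _ = Real.exp (2 * a) * E + Z' * B := by
          rw [integral_add (hE_int.const_mul _) (hgp'_int.mul_const B),
            integral_const_mul, integral_mul_const, hZ'_eq, hE_def]
  -- bound |Z - Z'|
  set c : ℝ := (Real.exp a - Real.exp (-a)) / 2 with hc_def
  set mmid : ℝ := (Real.exp a + Real.exp (-a)) / 2 with hm_def
  have hgc : ∀ x, |g x - mmid| ≤ c := by
    intro x
    rw [abs_le]
    constructor
    · have := hg_ge x; rw [hc_def, hm_def]; linarith
    · have := hg_le x; rw [hc_def, hm_def]; linarith
  have hc0 : 0 ≤ c := by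
    have : Real.exp (-a) ≤ Real.exp a := Real.exp_le_exp.2 (by linarith)
    rw [hc_def]; linarith
  have hgm'_int : Integrable (fun x => (g x - mmid) * (p x - p' x)) μ :=
    (hp_int.sub hp'_int).bdd_mul (hgm.sub measurable_const).aestronglyMeasurable
      (c := c) (ae_of_all _ fun x => by rw [Real.norm_eq_abs]; exact hgc x)
  have hZZ' : |Z - Z'| ≤ c * E := by
    have ia : Integrable (fun x => g x * p x - g x * p' x) μ := hgp_int.sub hgp'_int
    have ib : Integrable (fun x => p x * mmid - p' x * mmid) μ :=
      (hp_int.mul_const _).sub (hp'_int.mul_const _)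
    have hdiff : Z - Z' = ∫ x, (g x - mmid) * (p x - p' x) ∂μ := by
      have hcongr : ∫ x, (g x - mmid) * (p x - p' x) ∂μ
          = ∫ x, (g x * p x - g x * p' x) - (p x * mmid - p' x * mmid) ∂μ :=
        integral_congr_ae (ae_of_all _ fun x => by ring)
      rw [hcongr, integral_sub ia ib, integral_sub hgp_int hgp'_int,
        integral_sub (hp_int.mul_const _) (hp'_int.mul_const _),
        integral_mul_const, integral_mul_const, hp_one, hp'_one, hZ_eq, hZ'_eq]
      ring
    rw [hdiff]
    calc |∫ x, (g x - mmid) * (p x - p' x) ∂μ|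
        ≤ ∫ x, |g x - mmid| * |p x - p' x| ∂μ := by
          simpa [Real.norm_eq_abs, abs_mul] using
            norm_integral_le_integral_norm (μ := μ) (fun x => (g x - mmid) * (p x - p' x))
      _ ≤ ∫ x, c * |p x - p' x| ∂μ := by
          refine integral_mono
            (hgm'_int.abs.congr (ae_of_all _ fun x => abs_mul _ _))
            (hE_int.const_mul c) fun x => ?_
          exact mul_le_mul_of_nonneg_right (hgc x) (abs_nonneg _)
      _ = c * E := by rw [integral_const_mul, hE_def]
  have hZ'B : Z' * B ≤ Real.exp a * (c * E) := by
    have hBval : B = |Z - Z'| / (Z * Z') := by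
      rw [hB_def]
      rw [inv_sub_inv hZ_pos.ne' hZ'_pos.ne']
      rw [abs_div, abs_of_pos (mul_pos hZ_pos hZ'_pos), abs_sub_comm]
    rw [hBval]
    have h1 : Z' * (|Z - Z'| / (Z * Z')) = |Z - Z'| / Z := by
      field_simp
    rw [h1]
    calc |Z - Z'| / Z = |Z - Z'| * Z⁻¹ := div_eq_mul_inv _ _
      _ ≤ (c * E) * Real.exp a := mul_le_mul hZZ' hZinv (inv_nonneg.2 hZ_pos.le)
          (mul_nonneg hc0 hE0)
      _ = Real.exp a * (c * E) := by ring
  -- put part one together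
  have part1 : tvDist (gibbsTilt π fun ω => δ * F ω) (gibbsTilt π' fun ω => δ * F ω)
      ≤ (2 * Real.exp (2 * δ * Cab) - Real.exp (δ * Cab)) * tvDist π π' := by
    rw [tvDist_eq_of_ac hPμ hP'μ, hTV]
    set I : ℝ := ∫ x, |((gibbsTilt π fun ω => δ * F ω).rnDeriv μ x).toReal
      - ((gibbsTilt π' fun ω => δ * F ω).rnDeriv μ x).toReal| ∂μ with hI_def
    have hbound : I ≤ Real.exp (2 * a) * E + Real.exp a * (c * E) :=
      le_trans step1 (by linarith)
    have hee : Real.exp (δ * Cab) * Real.exp (-(δ * Cab)) = 1 := by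
      rw [← Real.exp_add]; simp
    have h2a : Real.exp (2 * a) = Real.exp (δ * Cab) * Real.exp (δ * Cab) := by
      rw [← Real.exp_add, ha_def]; ring_nf
    have h2b : Real.exp (2 * δ * Cab) = Real.exp (δ * Cab) * Real.exp (δ * Cab) := by
      rw [← Real.exp_add]; ring_nf
    have hcoef : Real.exp (2 * a) + Real.exp a * c
        ≤ 2 * Real.exp (2 * δ * Cab) - Real.exp (δ * Cab) := by
      rw [hc_def, ha_def, h2b]
      rw [ha_def] at h2a
      nlinarith [sq_nonneg (Real.exp (δ * Cab) - 1), hee, Real.exp_pos (δ * Cab),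
        Real.exp_pos (-(δ * Cab))]
    have h5 : (Real.exp (2 * a) + Real.exp a * c) * ((1 / 2) * E)
        ≤ (2 * Real.exp (2 * δ * Cab) - Real.exp (δ * Cab)) * ((1 / 2) * E) :=
      mul_le_mul_of_nonneg_right hcoef (by positivity)
    nlinarith
  refine ⟨part1, ?_⟩
  have hTVpos : 0 ≤ tvDist π π' := by rw [hTV]; positivity
  refine mul_le_mul_of_nonneg_right ?_ hTVpos
  have h2 : Real.exp (2 * δ * Cab) ≤ Real.exp (2 * Cab) := by
    refine Real.exp_le_exp.2 ?_
    nlinarith [mul_le_mul_of_nonneg_right hδ1 hC0]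
  have h3 := exp_sub_one_le_mul (2 * δ * Cab)
  have h5 := mul_le_mul_of_nonneg_left h2
    (mul_nonneg (mul_nonneg (by norm_num : (0:ℝ) ≤ 2) hδ0) hC0)
  have h4 : 1 ≤ Real.exp (δ * Cab) := Real.one_le_exp (mul_nonneg hδ0 hC0)
  nlinarith
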